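/- arXiv:2101.04991 — 3 statements merged into one kernel-verified Lean document; each statement's English description precedes it below -/
import Mathlib

section
/- The third order mock theta function ν satisfies 1 + ν(q) = ₁φ₁(q²; −q; q²; −1), i.e., 1 + Σ_{n≥0} q^{n(n+1)}/(−q;q²)_{n+1} = Σ_{n≥0} (q²;q²)_n/((−q;q²)_n (q²;q²)_n) · (−1)^n · (−1)^n q^{n(n−1)} for |q|<1. -/
open Complex

/-- The q-Pochhammer symbol `(a;q)_n = ∏_{j=0}^{n-1} (1 - a q^j)`. -/
noncomputable def qPoch (a q : ℂ) (n : ℕ) : ℂ := ∏ j ∈ Finset.range n, (1 - a * q ^ j)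

lemma qPoch_norm_factor_ge (q : ℂ) (hq1 : ‖q‖ < 1) (j : ℕ) :
    1 - ‖q‖ ≤ ‖1 - (-q) * (q ^ 2) ^ j‖ := by
  have h1 : ‖(-q) * (q ^ 2) ^ j‖ = ‖q‖ * (‖q‖ ^ 2) ^ j := by
    simp [norm_mul, norm_pow]
  have hq : (0:ℝ) ≤ ‖q‖ := norm_nonneg q
  have h2 : (‖q‖ ^ 2) ^ j ≤ 1 := pow_le_one₀ (by positivity) (by nlinarith)
  have h3 : ‖(-q) * (q ^ 2) ^ j‖ ≤ ‖q‖ := by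
    rw [h1]; nlinarith [pow_nonneg (sq_nonneg ‖q‖) j]
  have h4 : ‖(1:ℂ)‖ - ‖(-q) * (q ^ 2) ^ j‖ ≤ ‖1 - (-q) * (q ^ 2) ^ j‖ :=
    norm_sub_norm_le _ _
  simp only [norm_one] at h4
  linarith

lemma qPoch_norm_ge (q : ℂ) (hq1 : ‖q‖ < 1) (n : ℕ) :
    (1 - ‖q‖) ^ n ≤ ‖qPoch (-q) (q ^ 2) n‖ := by
  rw [qPoch, norm_prod]
  calc (1 - ‖q‖) ^ n = ∏ j ∈ Finset.range n, (1 - ‖q‖) := by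
        rw [Finset.prod_const, Finset.card_range]
    _ ≤ ∏ j ∈ Finset.range n, ‖1 - (-q) * (q ^ 2) ^ j‖ := by
        apply Finset.prod_le_prod
        · intro i _; linarith [norm_nonneg q]
        · intro i _; exact qPoch_norm_factor_ge q hq1 i

lemma qPoch_neg_ne_zero (q : ℂ) (hq1 : ‖q‖ < 1) (n : ℕ) :
    qPoch (-q) (q ^ 2) n ≠ 0 := by
  intro h
  have h1 := qPoch_norm_ge q hq1 n
  rw [h, norm_zero] at h1
  have h2 : (0:ℝ) < (1 - ‖q‖) ^ n := pow_pos (by linarith) n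
  linarith

lemma qPoch_sq_ne_zero (q : ℂ) (hq1 : ‖q‖ < 1) (n : ℕ) :
    qPoch (q ^ 2) (q ^ 2) n ≠ 0 := by
  rw [qPoch]
  apply Finset.prod_ne_zero_iff.2
  intro j _ h
  have h1 : (q ^ 2) * (q ^ 2) ^ j = 1 := (sub_eq_zero.1 h).symm
  have hq : (0:ℝ) ≤ ‖q‖ := norm_nonneg q
  have hsq : ‖q‖ ^ 2 < 1 := by nlinarith
  have h2 : ‖(q ^ 2) * (q ^ 2) ^ j‖ < 1 := by
    have hn : ‖(q ^ 2) * (q ^ 2) ^ j‖ = ‖q‖ ^ 2 * (‖q‖ ^ 2) ^ j := by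
      simp [norm_mul, norm_pow]
    have h3 : (‖q‖ ^ 2) ^ j ≤ 1 := pow_le_one₀ (by positivity) hsq.le
    rw [hn]
    nlinarith [pow_nonneg (sq_nonneg ‖q‖) j]
  rw [h1, norm_one] at h2
  exact lt_irrefl _ h2

lemma nu_summable (q : ℂ) (hq1 : ‖q‖ < 1) :
    Summable (fun n : ℕ => q ^ (n * (n + 1)) / qPoch (-q) (q ^ 2) (n + 1)) := by
  set c : ℝ := 1 - ‖q‖ with hc
  have hcpos : 0 < c := by rw [hc]; linarith
  obtain ⟨N, hN⟩ := exists_pow_lt_of_lt_one (by positivity : (0:ℝ) < c / 2) hq1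
  apply Summable.of_norm_bounded_eventually_nat (g := fun n => (1/2 : ℝ) ^ n)
    (summable_geometric_of_lt_one (by norm_num) (by norm_num))
  filter_upwards [Filter.eventually_ge_atTop N] with n hn
  rw [norm_div, norm_pow]
  have h1 : ‖q‖ ^ (n * (n + 1)) / ‖qPoch (-q) (q ^ 2) (n + 1)‖
      ≤ ‖q‖ ^ (n * (n + 1)) / c ^ (n + 1) :=
    div_le_div_of_nonneg_left (by positivity) (pow_pos hcpos _) (qPoch_norm_ge q hq1 (n+1))
  have h2 : ‖q‖ ^ (n * (n + 1)) / c ^ (n + 1) = (‖q‖ ^ n / c) ^ (n + 1) := by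
    rw [div_pow, ← pow_mul]
  have h3 : ‖q‖ ^ n / c ≤ 1 / 2 := by
    have : ‖q‖ ^ n ≤ ‖q‖ ^ N := pow_le_pow_of_le_one (norm_nonneg q) hq1.le hn
    rw [div_le_div_iff₀ hcpos (by norm_num)]
    nlinarith
  have h4 : (‖q‖ ^ n / c) ^ (n + 1) ≤ (1/2 : ℝ) ^ (n + 1) :=
    pow_le_pow_left₀ (by positivity) h3 (n + 1)
  have h5 : ((1:ℝ)/2) ^ (n + 1) ≤ (1/2 : ℝ) ^ n := by
    apply pow_le_pow_of_le_one (by norm_num) (by norm_num); omega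
  calc ‖q‖ ^ (n * (n + 1)) / ‖qPoch (-q) (q ^ 2) (n + 1)‖
      ≤ (‖q‖ ^ n / c) ^ (n + 1) := by rw [← h2]; exact h1
    _ ≤ (1/2 : ℝ) ^ (n + 1) := h4
    _ ≤ (1/2 : ℝ) ^ n := h5

set_option maxHeartbeats 1000000 in
/-- `1 + ν(q) = ₁φ₁(q²; −q; q²; −1)`. -/
theorem nu_eq_onePhiOne (q : ℂ) (hq0 : 0 < ‖q‖) (hq1 : ‖q‖ < 1) :
    1 + ∑' n : ℕ, q ^ (n * (n + 1)) / qPoch (-q) (q ^ 2) (n + 1)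
      = ∑' n : ℕ, qPoch (q ^ 2) (q ^ 2) n /
          (qPoch (-q) (q ^ 2) n * qPoch (q ^ 2) (q ^ 2) n) *
          (-1 : ℂ) ^ n * (-1 : ℂ) ^ n * q ^ (n * (n - 1)) := by
  have hterm : ∀ n : ℕ, qPoch (q ^ 2) (q ^ 2) n /
          (qPoch (-q) (q ^ 2) n * qPoch (q ^ 2) (q ^ 2) n) *
          (-1 : ℂ) ^ n * (-1 : ℂ) ^ n * q ^ (n * (n - 1))
      = q ^ (n * (n - 1)) / qPoch (-q) (q ^ 2) n := by
    intro n
    have hA := qPoch_sq_ne_zero q hq1 n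
    have hs : ((-1 : ℂ)) ^ n * (-1 : ℂ) ^ n = 1 := by
      rw [← mul_pow]; norm_num
    have hAB : qPoch (q ^ 2) (q ^ 2) n /
        (qPoch (-q) (q ^ 2) n * qPoch (q ^ 2) (q ^ 2) n)
        = 1 / qPoch (-q) (q ^ 2) n := by
      rw [mul_comm, ← div_div, div_self hA]
    rw [hAB, mul_assoc (1 / qPoch (-q) (q ^ 2) n), hs, mul_one, one_div,
      inv_mul_eq_div]
  rw [tsum_congr hterm]
  have hsum : Summable (fun n : ℕ =>
      q ^ ((n + 1) * ((n + 1) - 1)) / qPoch (-q) (q ^ 2) (n + 1)) := by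
    refine (nu_summable q hq1).congr fun n => ?_
    congr 2
    rw [Nat.add_sub_cancel, Nat.mul_comm]
  have hshift := tsum_eq_zero_add'
      (f := fun n : ℕ => q ^ (n * (n - 1)) / qPoch (-q) (q ^ 2) n) hsum
  rw [hshift]
  beta_reduce
  have h0 : q ^ (0 * (0 - 1)) / qPoch (-q) (q ^ 2) 0 = 1 := by
    simp [qPoch]
  rw [h0]
  congr 1
  apply tsum_congr
  intro n
  congr 2
  rw [Nat.add_sub_cancel, Nat.mul_comm]
end

section
/- The third order mock theta function ρ satisfies ρ(q) = ₁φ₁(q²; q; q²; −q), i.e., Σ_{n≥0} q^{n²}/(q;q²)_n = Σ_{n≥0} (q²;q²)_n/((q;q²)_n (q²;q²)_n) · (−q)^n · (−1)^n q^{n(n−1)} for |q|<1. -/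
open Complex

/-- `ρ(q) = ₁φ₁(q²; q; q²; −q)`. -/
theorem rho_eq_onePhiOne (q : ℂ) (hq0 : 0 < ‖q‖) (hq1 : ‖q‖ < 1) :
    ∑' n : ℕ, q ^ (n ^ 2) / qPoch q (q ^ 2) n
      = ∑' n : ℕ, qPoch (q ^ 2) (q ^ 2) n /
          (qPoch q (q ^ 2) n * qPoch (q ^ 2) (q ^ 2) n) *
          (-q) ^ n * (-1 : ℂ) ^ n * q ^ (n * (n - 1)) := by
  refine tsum_congr fun n => ?_
  have hA : qPoch (q ^ 2) (q ^ 2) n ≠ 0 := by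
    unfold qPoch
    refine Finset.prod_ne_zero_iff.mpr fun j _ => sub_ne_zero.mpr fun h => ?_
    have hlt : ‖q ^ 2 * (q ^ 2) ^ j‖ < 1 := by
      rw [norm_mul, norm_pow, norm_pow, norm_pow]
      have h1 : ‖q‖ ^ 2 < 1 := by nlinarith
      have h2 : (‖q‖ ^ 2) ^ j ≤ 1 := pow_le_one₀ (by positivity) h1.le
      nlinarith [pow_nonneg (pow_nonneg (norm_nonneg q) 2) j,
        pow_nonneg (norm_nonneg q) 2]
    rw [← h] at hlt
    simp at hlt
  have hdiv : qPoch (q ^ 2) (q ^ 2) n / (qPoch q (q ^ 2) n * qPoch (q ^ 2) (q ^ 2) n)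
      = 1 / qPoch q (q ^ 2) n := by
    rw [mul_comm, ← div_div, div_self hA]
  have hq : (-q) ^ n * (-1 : ℂ) ^ n = q ^ n := by
    rw [← mul_pow, neg_mul_neg, mul_one]
  have hn : n + n * (n - 1) = n ^ 2 := by
    cases n with
    | zero => rfl
    | succ m => simp [Nat.succ_sub_one]; ring
  rw [hdiv, mul_assoc (1 / qPoch q (q ^ 2) n), hq, ← hn, pow_add]
  ring
end

section
/- Fine's recurrence: for |q|<1 and parameters a, b, t with all denominators nonzero, F(a,b;t;q) = b/(b−at) + (b−a)t/((1−bq)(b−at)) · F(a,bq;t;q), where F(a,b;t;q) = Σ_{n≥0} (aq;q)_n/(bq;q)_n · t^n. -/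
open Complex

/-- Fine's function `F(a,b;t;q) = Σ_{n≥0} (aq;q)_n/(bq;q)_n · t^n`. -/
noncomputable def fineF (a b t q : ℂ) : ℂ :=
  ∑' n : ℕ, qPoch (a * q) q n / qPoch (b * q) q n * t ^ n

lemma qPoch_succ (x q : ℂ) (n : ℕ) :
    qPoch x q (n + 1) = qPoch x q n * (1 - x * q ^ n) :=
  Finset.prod_range_succ _ _

lemma qPoch_succ' (x q : ℂ) (n : ℕ) :
    qPoch x q (n + 1) = (1 - x) * qPoch (x * q) q n := by
  rw [qPoch, Finset.prod_range_succ']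
  simp only [pow_zero, mul_one]
  rw [mul_comm]
  congr 1
  refine Finset.prod_congr rfl fun i _ => ?_
  rw [pow_succ]
  ring

lemma qPoch_ne_zero {y q : ℂ} (hy : ∀ j : ℕ, 1 - y * q ^ j ≠ 0) (n : ℕ) :
    qPoch y q n ≠ 0 :=
  Finset.prod_ne_zero_iff.mpr fun j _ => hy j

lemma one_sub_sum_le_prod_one_sub (s : Finset ℕ) (f : ℕ → ℝ)
    (h0 : ∀ i ∈ s, 0 ≤ f i) (h1 : ∀ i ∈ s, f i ≤ 1) :
    1 - ∑ i ∈ s, f i ≤ ∏ i ∈ s, (1 - f i) := by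
  classical
  induction s using Finset.induction_on with
  | empty => simp
  | @insert a s ha ih =>
    rw [Finset.sum_insert ha, Finset.prod_insert ha]
    have hfa0 := h0 a (Finset.mem_insert_self a s)
    have hfa1 := h1 a (Finset.mem_insert_self a s)
    have hsum0 : 0 ≤ ∑ i ∈ s, f i :=
      Finset.sum_nonneg fun i hi => h0 i (Finset.mem_insert_of_mem hi)
    have ih' := ih (fun i hi => h0 i (Finset.mem_insert_of_mem hi))
      (fun i hi => h1 i (Finset.mem_insert_of_mem hi))
    have hmul : (1 - f a) * (1 - ∑ i ∈ s, f i) ≤ (1 - f a) * ∏ i ∈ s, (1 - f i) :=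
      mul_le_mul_of_nonneg_left ih' (by linarith)
    nlinarith

lemma geom_partial_le {r : ℝ} (h0 : 0 ≤ r) (h1 : r < 1) (n : ℕ) :
    ∑ j ∈ Finset.range n, r ^ j ≤ (1 - r)⁻¹ := by
  have := Summable.sum_le_tsum (Finset.range n) (fun i _ => pow_nonneg h0 i)
    (summable_geometric_of_lt_one h0 h1)
  rwa [tsum_geometric_of_lt_one h0 h1] at this

lemma qPoch_norm_le (x q : ℂ) (hq1 : ‖q‖ < 1) (n : ℕ) :
    ‖qPoch x q n‖ ≤ Real.exp (‖x‖ * (1 - ‖q‖)⁻¹) := by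
  calc ‖qPoch x q n‖ ≤ ∏ j ∈ Finset.range n, ‖1 - x * q ^ j‖ := by
        rw [qPoch, norm_prod]
    _ ≤ ∏ j ∈ Finset.range n, Real.exp (‖x‖ * ‖q‖ ^ j) := by
        refine Finset.prod_le_prod (fun j _ => norm_nonneg _) (fun j _ => ?_)
        have h1 : ‖1 - x * q ^ j‖ ≤ 1 + ‖x‖ * ‖q‖ ^ j := by
          calc ‖1 - x * q ^ j‖ ≤ ‖(1 : ℂ)‖ + ‖x * q ^ j‖ := norm_sub_le _ _
            _ = 1 + ‖x‖ * ‖q‖ ^ j := by rw [norm_one, norm_mul, norm_pow]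
        have h2 : ‖x‖ * ‖q‖ ^ j + 1 ≤ Real.exp (‖x‖ * ‖q‖ ^ j) := Real.add_one_le_exp _
        linarith
    _ = Real.exp (∑ j ∈ Finset.range n, ‖x‖ * ‖q‖ ^ j) := (Real.exp_sum _ _).symm
    _ ≤ Real.exp (‖x‖ * (1 - ‖q‖)⁻¹) := by
        apply Real.exp_le_exp.mpr
        rw [← Finset.mul_sum]
        exact mul_le_mul_of_nonneg_left
          (geom_partial_le (norm_nonneg q) hq1 n) (norm_nonneg x)

lemma qPoch_norm_lower (y q : ℂ) (hq1 : ‖q‖ < 1)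
    (hy : ∀ j : ℕ, 1 - y * q ^ j ≠ 0) :
    ∃ δ : ℝ, 0 < δ ∧ ∀ n, δ ≤ ‖qPoch y q n‖ := by
  have hq0 : (0 : ℝ) ≤ ‖q‖ := norm_nonneg q
  have hq1' : (0 : ℝ) < 1 - ‖q‖ := by linarith
  -- choose N with ‖y‖ * ‖q‖^N * (1-‖q‖)⁻¹ ≤ 1/2
  obtain ⟨N, hN⟩ : ∃ N : ℕ, ‖y‖ * ‖q‖ ^ N * (1 - ‖q‖)⁻¹ ≤ 1 / 2 := by
    have hε : (0 : ℝ) < (1 - ‖q‖) / (2 * (‖y‖ + 1)) := by positivity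
    obtain ⟨N, hN⟩ := exists_pow_lt_of_lt_one hε hq1
    refine ⟨N, ?_⟩
    have hy0 : (0 : ℝ) ≤ ‖y‖ := norm_nonneg y
    have h1 : ‖y‖ * ‖q‖ ^ N ≤ (‖y‖ + 1) * ((1 - ‖q‖) / (2 * (‖y‖ + 1))) := by
      have := mul_le_mul_of_nonneg_left hN.le (by linarith : (0:ℝ) ≤ ‖y‖ + 1)
      nlinarith [pow_nonneg hq0 N]
    have h2 : (‖y‖ + 1) * ((1 - ‖q‖) / (2 * (‖y‖ + 1))) = (1 - ‖q‖) / 2 := by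
      field_simp
    rw [h2] at h1
    have hne : (1 : ℝ) - ‖q‖ ≠ 0 := ne_of_gt hq1'
    calc ‖y‖ * ‖q‖ ^ N * (1 - ‖q‖)⁻¹ ≤ (1 - ‖q‖) / 2 * (1 - ‖q‖)⁻¹ :=
          mul_le_mul_of_nonneg_right h1 (by positivity)
      _ = 1 / 2 := by rw [div_mul_eq_mul_div, mul_inv_cancel₀ hne]
  -- the minimum of the first N+1 partial products
  have hne : (Finset.range (N + 1)).Nonempty := ⟨0, by simp⟩
  set m : ℝ := (Finset.range (N + 1)).inf' hne (fun n => ‖qPoch y q n‖) with hm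
  have hmpos : 0 < m := by
    rw [hm, Finset.lt_inf'_iff]
    intro i _
    exact norm_pos_iff.mpr (qPoch_ne_zero hy i)
  have hmle : ∀ n ≤ N, m ≤ ‖qPoch y q n‖ := fun n hn =>
    Finset.inf'_le _ (Finset.mem_range.mpr (Nat.lt_succ_of_le hn))
  refine ⟨m / 2, by positivity, fun n => ?_⟩
  rcases le_or_gt n N with h | h
  · have := hmle n h
    linarith
  · -- n = N + k
    obtain ⟨k, rfl⟩ : ∃ k, n = N + k := ⟨n - N, by omega⟩
    have key : ∀ j : ℕ, N ≤ j → ‖y‖ * ‖q‖ ^ j ≤ 1 / 2 := by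
      intro j hj
      have h1 : ‖q‖ ^ j ≤ ‖q‖ ^ N := pow_le_pow_of_le_one hq0 hq1.le hj
      have h2 : ‖y‖ * ‖q‖ ^ j ≤ ‖y‖ * ‖q‖ ^ N :=
        mul_le_mul_of_nonneg_left h1 (norm_nonneg y)
      have h3 : ‖y‖ * ‖q‖ ^ N ≤ ‖y‖ * ‖q‖ ^ N * (1 - ‖q‖)⁻¹ := by
        nlinarith [mul_nonneg (norm_nonneg y) (pow_nonneg hq0 N),
          inv_anti₀ hq1' (by linarith : 1 - ‖q‖ ≤ 1)]
      linarith
    have hsplit : qPoch y q (N + k) =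
        qPoch y q N * ∏ i ∈ Finset.range k, (1 - y * q ^ (N + i)) := by
      rw [qPoch, qPoch, Finset.prod_range_add]
    have hprod_lower : (1 : ℝ) / 2 ≤ ‖∏ i ∈ Finset.range k, (1 - y * q ^ (N + i))‖ := by
      rw [norm_prod]
      have step1 : ∏ i ∈ Finset.range k, (1 - ‖y‖ * ‖q‖ ^ (N + i)) ≤
          ∏ i ∈ Finset.range k, ‖1 - y * q ^ (N + i)‖ := by
        refine Finset.prod_le_prod (fun i _ => ?_) (fun i _ => ?_)
        · have := key (N + i) (Nat.le_add_right N i); linarith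
        · have h1 : ‖(1 : ℂ)‖ - ‖y * q ^ (N + i)‖ ≤ ‖1 - y * q ^ (N + i)‖ :=
            norm_sub_norm_le _ _
          rw [norm_one, norm_mul, norm_pow] at h1
          exact h1
      have step2 : 1 - ∑ i ∈ Finset.range k, (‖y‖ * ‖q‖ ^ (N + i)) ≤
          ∏ i ∈ Finset.range k, (1 - ‖y‖ * ‖q‖ ^ (N + i)) := by
        refine one_sub_sum_le_prod_one_sub _ _ (fun i _ => ?_) (fun i _ => ?_)
        · positivity
        · have := key (N + i) (Nat.le_add_right N i); linarith
      have step3 : ∑ i ∈ Finset.range k, (‖y‖ * ‖q‖ ^ (N + i)) ≤ 1 / 2 := by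
        have heq : ∀ i, ‖y‖ * ‖q‖ ^ (N + i) = ‖y‖ * ‖q‖ ^ N * ‖q‖ ^ i := by
          intro i; rw [pow_add]; ring
        calc ∑ i ∈ Finset.range k, (‖y‖ * ‖q‖ ^ (N + i))
            = ‖y‖ * ‖q‖ ^ N * ∑ i ∈ Finset.range k, ‖q‖ ^ i := by
              rw [Finset.mul_sum]; exact Finset.sum_congr rfl fun i _ => heq i
          _ ≤ ‖y‖ * ‖q‖ ^ N * (1 - ‖q‖)⁻¹ := by
              refine mul_le_mul_of_nonneg_left (geom_partial_le hq0 hq1 k) ?_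
              positivity
          _ ≤ 1 / 2 := hN
      linarith
    rw [hsplit, norm_mul]
    have hPN : m ≤ ‖qPoch y q N‖ := hmle N le_rfl
    calc m / 2 = m * (1 / 2) := by ring
      _ ≤ ‖qPoch y q N‖ * ‖∏ i ∈ Finset.range k, (1 - y * q ^ (N + i))‖ := by
          apply mul_le_mul hPN hprod_lower (by norm_num) (norm_nonneg _)

lemma summable_fine (x y t q : ℂ) (hq1 : ‖q‖ < 1) (ht : ‖t‖ < 1)
    (hy : ∀ j : ℕ, 1 - y * q ^ j ≠ 0) :
    Summable (fun n : ℕ => qPoch x q n / qPoch y q n * t ^ n) := by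
  obtain ⟨δ, hδ, hlow⟩ := qPoch_norm_lower y q hq1 hy
  set C := Real.exp (‖x‖ * (1 - ‖q‖)⁻¹) with hC
  apply Summable.of_norm
  refine Summable.of_nonneg_of_le (fun n => norm_nonneg _) (fun n => ?_)
    ((summable_geometric_of_lt_one (norm_nonneg t) ht).mul_left (C / δ))
  rw [norm_mul, norm_div, norm_pow]
  refine mul_le_mul_of_nonneg_right ?_ (pow_nonneg (norm_nonneg t) n)
  exact div_le_div₀ (Real.exp_pos _).le (qPoch_norm_le x q hq1 n) hδ (hlow n)

/-- Fine's recurrence (4.4). -/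
theorem fine_recurrence (q a b t : ℂ) (hq0 : 0 < ‖q‖) (hq1 : ‖q‖ < 1) (ht : ‖t‖ < 1)
    (hb : ∀ m : ℕ, 1 ≤ m → b * q ^ m ≠ 1) (hbt : b ≠ a * t) :
    fineF a b t q
      = b / (b - a * t) +
        (b - a) * t / ((1 - b * q) * (b - a * t)) * fineF a (b * q) t q := by
  have hy1 : ∀ j : ℕ, 1 - b * q * q ^ j ≠ 0 := by
    intro j h
    exact hb (j + 1) (by omega) (by rw [pow_succ]; linear_combination -h)
  have hy2 : ∀ j : ℕ, 1 - b * q * q * q ^ j ≠ 0 := by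
    intro j h
    exact hb (j + 2) (by omega) (by rw [pow_succ, pow_succ]; linear_combination -h)
  have h1bq : (1 : ℂ) - b * q ≠ 0 := by simpa using hy1 0
  have hbt' : b - a * t ≠ 0 := sub_ne_zero.mpr hbt
  set f : ℕ → ℂ := fun n => qPoch (a * q) q n / qPoch (b * q) q n * t ^ n with hfdef
  set g : ℕ → ℂ := fun n => qPoch (a * q) q n / qPoch (b * q * q) q n * t ^ n with hgdef
  have hf : Summable f := summable_fine _ _ _ _ hq1 ht hy1
  have hg : Summable g := summable_fine _ _ _ _ hq1 ht hy2
  have hshift : Summable (fun n => f (n + 1)) := (summable_nat_add_iff 1).mpr hf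
  have hterm : ∀ n : ℕ, b * f (n + 1) - a * t * f n = (b - a) * t / (1 - b * q) * g n := by
    intro n
    have hBn : qPoch (b * q) q n ≠ 0 := qPoch_ne_zero hy1 n
    have hBn' : qPoch (b * q * q) q n ≠ 0 := qPoch_ne_zero hy2 n
    have hfac : (1 : ℂ) - b * q * q ^ n ≠ 0 := hy1 n
    have hrel : qPoch (b * q) q (n + 1) = (1 - b * q) * qPoch (b * q * q) q n :=
      qPoch_succ' (b * q) q n
    have hBsucc : qPoch (b * q) q (n + 1) = qPoch (b * q) q n * (1 - b * q * q ^ n) :=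
      qPoch_succ (b * q) q n
    have hAsucc : qPoch (a * q) q (n + 1) = qPoch (a * q) q n * (1 - a * q * q ^ n) :=
      qPoch_succ (a * q) q n
    have hrel' : qPoch (b * q) q n * (1 - b * q * q ^ n) = (1 - b * q) * qPoch (b * q * q) q n := by
      rw [← hBsucc, hrel]
    simp only [hfdef, hgdef]
    rw [hAsucc, hBsucc, pow_succ]
    have h1 : b * (qPoch (a * q) q n * (1 - a * q * q ^ n) /
          (qPoch (b * q) q n * (1 - b * q * q ^ n)) * (t ^ n * t)) -
          a * t * (qPoch (a * q) q n / qPoch (b * q) q n * t ^ n)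
        = (b * (1 - a * q * q ^ n) - a * (1 - b * q * q ^ n)) *
            (qPoch (a * q) q n * t ^ n * t) / (qPoch (b * q) q n * (1 - b * q * q ^ n)) := by
      field_simp
    have hba : b * (1 - a * q * q ^ n) - a * (1 - b * q * q ^ n) = b - a := by ring
    rw [h1, hba, hrel']
    field_simp
  have key : (b - a * t) * (∑' n, f n) = b + (b - a) * t / (1 - b * q) * ∑' n, g n := by
    have hf0 : f 0 = 1 := by simp [hfdef, qPoch]
    calc (b - a * t) * (∑' n, f n)
        = b * (∑' n, f n) - a * t * (∑' n, f n) := by ring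
      _ = b * (f 0 + ∑' n, f (n + 1)) - a * t * (∑' n, f n) := by
          rw [hf.tsum_eq_zero_add]
      _ = b * f 0 + ((∑' n, b * f (n + 1)) - (∑' n, a * t * f n)) := by
          rw [tsum_mul_left, tsum_mul_left]; ring
      _ = b * f 0 + ∑' n, (b * f (n + 1) - a * t * f n) := by
          rw [Summable.tsum_sub (hshift.mul_left b) (hf.mul_left (a * t))]
      _ = b * f 0 + ∑' n, (b - a) * t / (1 - b * q) * g n := by
          rw [tsum_congr hterm]
      _ = b + (b - a) * t / (1 - b * q) * ∑' n, g n := by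
          rw [tsum_mul_left, hf0, mul_one]
  have hS : fineF a b t q = ∑' n, f n := rfl
  have hS' : fineF a (b * q) t q = ∑' n, g n := rfl
  have key2 : (1 - b * q) * ((b - a * t) * ∑' n, f n)
      = (1 - b * q) * b + (b - a) * t * ∑' n, g n := by
    rw [key]
    field_simp
  have hden : (1 - b * q) * (b - a * t) ≠ 0 := mul_ne_zero h1bq hbt'
  have rhs_eq : (1 - b * q) * (b - a * t) *
      (b / (b - a * t) + (b - a) * t / ((1 - b * q) * (b - a * t)) * ∑' n, g n)
      = (1 - b * q) * b + (b - a) * t * ∑' n, g n := by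
    field_simp
  rw [hS, hS']
  apply mul_left_cancel₀ hden
  rw [rhs_eq]
  linear_combination key2
end
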